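/- For c ∈ (0,1), δ ∈ (0,1), and integers n > c: (1 - (c/n)(1-δ))·log((1 - (c/n)(1-δ))/(1 - c/n)) + (c/n)(1-δ)·log(1-δ) ≤ c·δ²/(n - c). -/
import Mathlib

theorem clique_kl_bound (c δ : ℝ) (n : ℕ)
    (hc0 : 0 < c) (hc1 : c < 1)
    (hδ0 : 0 < δ) (hδ1 : δ < 1) (hn : c < (n : ℝ)) :
    (1 - c / n * (1 - δ)) * Real.log ((1 - c / n * (1 - δ)) / (1 - c / n))
      + c / n * (1 - δ) * Real.log (1 - δ)
      ≤ c * δ ^ 2 / ((n : ℝ) - c) := by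
  have hn0 : (0:ℝ) < n := hc0.trans hn
  set p := c / n with hp
  have hp0 : 0 < p := div_pos hc0 hn0
  have hp1 : p < 1 := (div_lt_one hn0).2 hn
  have hq0 : 0 < 1 - δ := by linarith
  have hpq : p * (1 - δ) < 1 := by nlinarith
  have hA : 0 < 1 - p * (1 - δ) := by linarith
  have hB : 0 < 1 - p := by linarith
  have h1 := Real.log_le_sub_one_of_pos (div_pos hA hB)
  have h2 := Real.log_le_sub_one_of_pos hq0
  have hrhs : c * δ ^ 2 / ((n : ℝ) - c) = p * δ ^ 2 / (1 - p) := by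
    have hnc : (n:ℝ) - c ≠ 0 := by linarith
    have hB' : 1 - p ≠ 0 := hB.ne'
    rw [hp] at hB' ⊢
    field_simp
  rw [hrhs]
  have t1 : (1 - p * (1 - δ)) * Real.log ((1 - p * (1 - δ)) / (1 - p))
      ≤ (1 - p * (1 - δ)) * ((1 - p * (1 - δ)) / (1 - p) - 1) :=
    mul_le_mul_of_nonneg_left h1 hA.le
  have t2 : p * (1 - δ) * Real.log (1 - δ) ≤ p * (1 - δ) * ((1 - δ) - 1) :=
    mul_le_mul_of_nonneg_left h2 (mul_nonneg hp0.le hq0.le)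
  have heq : (1 - p * (1 - δ)) * ((1 - p * (1 - δ)) / (1 - p) - 1)
      + p * (1 - δ) * ((1 - δ) - 1) = p * δ ^ 2 / (1 - p) := by
    field_simp
    ring
  linarith
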